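/- Let β_A, β_H > 0 and α_A, α_H > 0 with α_H·β_A − α_A·β_H ≠ 0. Then for every initial size ω₀ ≥ 1 and every horizon n ≥ 1, the relative entropy satisfies I_n ≤ E_n^U, where: if β_A ≠ 1, E_n^U := ((β_A·(log(β_A/β_H) − 1) + β_H)/(1 − β_A))·(ω₀ − α_A/(1 − β_A))·(1 − β_A^n) + [ α_A·(β_A·(log(β_A/β_H) − 1) + β_H)/(β_A·(1 − β_A)) + α_A·(log(α_A·β_H/(α_H·β_A)) − β_H/β_A) + α_H ]·n; if β_A = 1, E_n^U := (β_H − log β_H − 1)·( (α_A/2)·n² + (ω₀ + α_A/2)·n ) + [ α_A·(log(α_A·β_H/α_H) − β_H) + α_H ]·n. -/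

import Mathlib

open Real Filter

/-- One transition weight of the Poisson Galton–Watson process with immigration:
probability that the next generation size is `y` given the previous size is `x`. -/
noncomputable def gwStep (β α : ℝ) (x y : ℕ) : ℝ :=
  Real.exp (-(β * (x : ℝ) + α)) * (β * (x : ℝ) + α) ^ y / (Nat.factorial y : ℝ)

/-- The `n`-step path law (pmf on `Fin n → ℕ`) with initial generation size `ω₀`. -/
noncomputable def gwPath (β α : ℝ) (ω₀ n : ℕ) (ω : Fin n → ℕ) : ℝ :=
  ∏ k : Fin n,
    gwStep β α
      (if (k : ℕ) = 0 then ω₀ else ω ⟨(k : ℕ) - 1, Nat.lt_of_le_of_lt (Nat.sub_le _ _) k.2⟩)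
      (ω k)

/-- Relative entropy between the `n`-step path laws (summands with vanishing
`p_A` contribute `0`, since they are multiplied by `p_A`). -/
noncomputable def relEnt (βA αA βH αH : ℝ) (ω₀ n : ℕ) : ℝ :=
  ∑' ω : Fin n → ℕ,
    gwPath βA αA ω₀ n ω * Real.log (gwPath βA αA ω₀ n ω / gwPath βH αH ω₀ n ω)

set_option linter.unusedVariables false
set_option linter.unusedSectionVars false

section basic
variable {β α : ℝ}

lemma lam_pos (hβ : 0 < β) (hα : 0 < α) (x : ℕ) : 0 < β * (x : ℝ) + α := by positivity

lemma gwStep_pos (hβ : 0 < β) (hα : 0 < α) (x y : ℕ) : 0 < gwStep β α x y := by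
  have := lam_pos hβ hα x
  unfold gwStep; positivity

lemma gwStep_hasSum (x : ℕ) : HasSum (gwStep β α x) 1 := by
  set l : ℝ := β * (x : ℝ) + α with hl
  unfold gwStep
  apply (hasSum_mul_left_iff (Real.exp_ne_zero l)).mp
  simp only [mul_one]
  have : (fun y ↦ rexp l * (rexp (-l) * l ^ y / (Nat.factorial y : ℝ))) =
      fun y ↦ l ^ y / (Nat.factorial y : ℝ) := by
    ext y
    rw [mul_div_assoc, Real.exp_neg, ← mul_assoc, ← div_eq_mul_inv,
      div_self (Real.exp_ne_zero l), one_mul]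
  rw [this, Real.exp_eq_exp_ℝ]
  exact NormedSpace.expSeries_div_hasSum_exp l

lemma gwStep_summable (x : ℕ) : Summable (gwStep β α x) := (gwStep_hasSum x).summable

lemma gwStep_tsum (x : ℕ) : ∑' y, gwStep β α x y = 1 := (gwStep_hasSum x).tsum_eq

lemma gwStep_succ (x y : ℕ) :
    gwStep β α x (y + 1) = (β * (x : ℝ) + α) / (y + 1 : ℝ) * gwStep β α x y := by
  unfold gwStep
  have h1 : (Nat.factorial (y+1) : ℝ) = (y+1 : ℝ) * Nat.factorial y := by
    push_cast [Nat.factorial_succ]; ring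
  rw [h1, pow_succ]
  have h2 : (0:ℝ) < (y:ℝ)+1 := by positivity
  have h3 : (Nat.factorial y : ℝ) ≠ 0 := by positivity
  field_simp

lemma gwStep_mul_summable (hβ : 0 < β) (hα : 0 < α) (x : ℕ) : Summable (fun y : ℕ => gwStep β α x y * y) := by
  rw [← summable_nat_add_iff 1]
  have : (fun y : ℕ => gwStep β α x (y + 1) * (y + 1 : ℕ)) =
      fun y : ℕ => (β * (x : ℝ) + α) * gwStep β α x y := by
    ext y
    rw [gwStep_succ]
    push_cast
    have h2 : ((y:ℝ)+1) ≠ 0 := by positivity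
    field_simp
  rw [this]
  exact (gwStep_summable x).mul_left _

lemma gwStep_tsum_mul (hβ : 0 < β) (hα : 0 < α) (x : ℕ) : ∑' y, gwStep β α x y * y = β * (x : ℝ) + α := by
  rw [Summable.tsum_eq_zero_add (gwStep_mul_summable hβ hα x)]
  have : (fun y : ℕ => gwStep β α x (y + 1) * ((y:ℝ) + 1)) =
      fun y : ℕ => (β * (x : ℝ) + α) * gwStep β α x y := by
    ext y
    rw [gwStep_succ]
    have h2 : ((y:ℝ)+1) ≠ 0 := by positivity
    field_simp
  simp only [Nat.cast_zero, mul_zero, zero_add, Nat.cast_add, Nat.cast_one]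
  rw [this, tsum_mul_left, gwStep_tsum x, mul_one]

end basic

lemma gwPath_zero (β α : ℝ) (ω₀ : ℕ) (ω : Fin 0 → ℕ) : gwPath β α ω₀ 0 ω = 1 := by
  simp [gwPath]


lemma cons_mk_succ {n : ℕ} (y : ℕ) (ω : Fin n → ℕ) (k : ℕ) (h : k + 1 < n + 1) (h' : k < n) :
    (Fin.cons y ω : Fin (n+1) → ℕ) ⟨k+1, h⟩ = ω ⟨k, h'⟩ := by
  have e : (⟨k+1, h⟩ : Fin (n+1)) = Fin.succ ⟨k, h'⟩ := rfl
  rw [e, Fin.cons_succ]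

lemma gwPath_cons (β α : ℝ) (ω₀ n : ℕ) (y : ℕ) (ω : Fin n → ℕ) :
    gwPath β α ω₀ (n+1) (Fin.cons y ω) = gwStep β α ω₀ y * gwPath β α y n ω := by
  unfold gwPath
  rw [Fin.prod_univ_succ]
  congr 1
  apply Finset.prod_congr rfl
  intro i _
  congr 1
  have hne : (↑i.succ : ℕ) ≠ 0 := by simp
  rw [if_neg hne]
  have hval : (↑i.succ : ℕ) - 1 = (i : ℕ) := by simp
  rcases Nat.eq_zero_or_pos (i : ℕ) with h | h
  · rw [if_pos h]
    have e : (⟨(↑i.succ : ℕ) - 1, Nat.lt_of_le_of_lt (Nat.sub_le _ _) i.succ.2⟩ : Fin (n+1)) = 0 := by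
      ext; simp [hval, h]
    rw [e, Fin.cons_zero]
  · rw [if_neg (Nat.pos_iff_ne_zero.mp h)]
    obtain ⟨j, hj⟩ := Nat.exists_eq_succ_of_ne_zero (Nat.pos_iff_ne_zero.mp h)
    have h' : j < n := by omega
    have hlt : j + 1 < n + 1 := by omega
    have e : (⟨(↑i.succ : ℕ) - 1, Nat.lt_of_le_of_lt (Nat.sub_le _ _) i.succ.2⟩ : Fin (n+1)) =
        ⟨j + 1, hlt⟩ := by ext; simp [hval, hj]
    rw [e, cons_mk_succ y ω j hlt h']
    congr 1
    ext
    simp [hj]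

noncomputable def AS (β : ℝ) : ℕ → ℝ
  | 0 => 0
  | n+1 => β * (1 + AS β n)

noncomputable def BS (β α : ℝ) : ℕ → ℝ
  | 0 => 0
  | n+1 => α * (1 + AS β n) + BS β α n

section path
variable {β α : ℝ} (hβ : 0 < β) (hα : 0 < α)
include hβ hα

lemma gwPath_pos (x n : ℕ) (ω : Fin n → ℕ) : 0 < gwPath β α x n ω :=
  Finset.prod_pos fun _ _ => gwStep_pos hβ hα _ _

omit hβ hα in
/-- The path equivalence. -/
def pathEquiv (n : ℕ) : ℕ × (Fin n → ℕ) ≃ (Fin (n+1) → ℕ) :=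
  Fin.consEquiv (fun _ => ℕ)

omit hβ hα in
lemma pathEquiv_apply (n : ℕ) (p : ℕ × (Fin n → ℕ)) :
    pathEquiv n p = Fin.cons p.1 p.2 := rfl

lemma gwPath_sum_one (n : ℕ) : ∀ x : ℕ,
    Summable (gwPath β α x n) ∧ ∑' ω, gwPath β α x n ω = 1 := by
  induction n with
  | zero =>
    intro x
    have hfin : Finite (Fin 0 → ℕ) := Finite.of_subsingleton
    constructor
    · exact Summable.of_finite
    · rw [tsum_eq_single (fun i => i.elim0) (by intro b hb; exact absurd (Subsingleton.elim b _) hb)]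
      exact gwPath_zero β α x _
  | succ n ih =>
    intro x
    set f : ℕ × (Fin n → ℕ) → ℝ := fun p => gwPath β α x (n+1) (Fin.cons p.1 p.2) with hf
    have hfe : ∀ p : ℕ × (Fin n → ℕ), f p = gwStep β α x p.1 * gwPath β α p.1 n p.2 := by
      intro p; rw [hf]; exact gwPath_cons β α x n p.1 p.2
    have hnn : 0 ≤ f := by
      intro p; rw [hfe]
      exact le_of_lt (mul_pos (gwStep_pos hβ hα _ _) (gwPath_pos hβ hα _ _ _))
    have hslice : ∀ y : ℕ, Summable fun ω => f (y, ω) := by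
      intro y
      simp only [hfe]
      exact ((ih y).1.mul_left _)
    have hiter : ∀ y : ℕ, ∑' ω, f (y, ω) = gwStep β α x y := by
      intro y
      simp only [hfe]
      rw [tsum_mul_left, (ih y).2, mul_one]
    have hitersum : Summable fun y => ∑' ω, f (y, ω) := by
      simp only [hiter]; exact gwStep_summable x
    have hsum : Summable f :=
      (summable_prod_of_nonneg hnn).mpr ⟨hslice, hitersum⟩
    have hsum' : Summable (gwPath β α x (n+1)) :=
      (Equiv.summable_iff (pathEquiv n) (f := gwPath β α x (n+1))).mp hsum
    refine ⟨hsum', ?_⟩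
    rw [← Equiv.tsum_eq (pathEquiv n) (gwPath β α x (n+1))]
    have : ∑' p : ℕ × (Fin n → ℕ), gwPath β α x (n+1) (pathEquiv n p) = ∑' p, f p := rfl
    rw [this, Summable.tsum_prod' hsum hslice]
    simp only [hiter]
    exact gwStep_tsum x

lemma gwPath_sum_mom (n : ℕ) : ∀ x : ℕ,
    Summable (fun ω => gwPath β α x n ω * (∑ k, (ω k : ℝ))) ∧
    ∑' ω, gwPath β α x n ω * (∑ k, (ω k : ℝ)) = AS β n * x + BS β α n := by
  induction n with
  | zero =>
    intro x
    have hfin : Finite (Fin 0 → ℕ) := Finite.of_subsingleton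
    constructor
    · exact Summable.of_finite
    · rw [tsum_eq_single (fun i => i.elim0) (by intro b hb; exact absurd (Subsingleton.elim b _) hb)]
      simp [AS, BS]
  | succ n ih =>
    intro x
    set f : ℕ × (Fin n → ℕ) → ℝ := fun p =>
      gwPath β α x (n+1) (Fin.cons p.1 p.2) * (∑ k, ((Fin.cons p.1 p.2 : Fin (n+1) → ℕ) k : ℝ)) with hf
    have hfe : ∀ p : ℕ × (Fin n → ℕ), f p =
        gwStep β α x p.1 * (gwPath β α p.1 n p.2 * ((p.1 : ℝ) + ∑ k, (p.2 k : ℝ))) := by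
      intro p
      rw [hf]
      simp only
      rw [gwPath_cons β α x n p.1 p.2]
      have : (∑ k, ((Fin.cons p.1 p.2 : Fin (n+1) → ℕ) k : ℝ)) = (p.1 : ℝ) + ∑ k, (p.2 k : ℝ) := by
        rw [Fin.sum_univ_succ]
        simp [Fin.cons_succ]
      rw [this]; ring
    have hnn : 0 ≤ f := by
      intro p; rw [hfe]
      have h1 : (0:ℝ) ≤ (p.1 : ℝ) + ∑ k, (p.2 k : ℝ) := by positivity
      have := gwStep_pos hβ hα x p.1
      have := gwPath_pos hβ hα p.1 n p.2
      positivity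
    have hslice : ∀ y : ℕ, Summable fun ω => f (y, ω) := by
      intro y
      simp only [hfe]
      apply Summable.mul_left
      have h1 : Summable (fun ω => gwPath β α y n ω * (y : ℝ)) :=
        ((gwPath_sum_one hβ hα n y).1.mul_right _)
      have h2 := (ih y).1
      have : (fun ω => gwPath β α y n ω * ((y : ℝ) + ∑ k, (ω k : ℝ))) =
          fun ω => gwPath β α y n ω * (y:ℝ) + gwPath β α y n ω * (∑ k, (ω k : ℝ)) := by
        ext ω; ring
      rw [this]
      exact h1.add h2
    have hiter : ∀ y : ℕ, ∑' ω, f (y, ω) =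
        gwStep β α x y * ((1 + AS β n) * (y:ℝ) + BS β α n) := by
      intro y
      simp only [hfe]
      rw [tsum_mul_left]
      congr 1
      have : (fun ω => gwPath β α y n ω * ((y : ℝ) + ∑ k, (ω k : ℝ))) =
          fun ω => gwPath β α y n ω * (y:ℝ) + gwPath β α y n ω * (∑ k, (ω k : ℝ)) := by
        ext ω; ring
      rw [this, Summable.tsum_add (((gwPath_sum_one hβ hα n y).1.mul_right _)) (ih y).1,
        tsum_mul_right, (gwPath_sum_one hβ hα n y).2, (ih y).2]
      ring
    have hitersum : Summable fun y => ∑' ω, f (y, ω) := by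
      simp only [hiter]
      have : (fun y : ℕ => gwStep β α x y * ((1 + AS β n) * (y:ℝ) + BS β α n)) =
          fun y : ℕ => (1 + AS β n) * (gwStep β α x y * (y:ℝ)) + BS β α n * gwStep β α x y := by
        ext y; ring
      rw [this]
      exact ((gwStep_mul_summable hβ hα x).mul_left _).add ((gwStep_summable x).mul_left _)
    have hsum : Summable f :=
      (summable_prod_of_nonneg hnn).mpr ⟨hslice, hitersum⟩
    have hsum' : Summable (fun ω => gwPath β α x (n+1) ω * (∑ k, (ω k : ℝ))) :=
      (Equiv.summable_iff (pathEquiv n) (f := fun ω => gwPath β α x (n+1) ω * (∑ k, (ω k : ℝ)))).mp hsum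
    refine ⟨hsum', ?_⟩
    rw [← Equiv.tsum_eq (pathEquiv n) (fun ω => gwPath β α x (n+1) ω * (∑ k, (ω k : ℝ)))]
    have he : ∑' p : ℕ × (Fin n → ℕ),
        gwPath β α x (n+1) (pathEquiv n p) * (∑ k, ((pathEquiv n p) k : ℝ)) = ∑' p, f p := rfl
    rw [he, Summable.tsum_prod' hsum hslice]
    simp only [hiter]
    have : (fun y : ℕ => gwStep β α x y * ((1 + AS β n) * (y:ℝ) + BS β α n)) =
        fun y : ℕ => (1 + AS β n) * (gwStep β α x y * (y:ℝ)) + BS β α n * gwStep β α x y := by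
      ext y; ring
    rw [this, Summable.tsum_add (((gwStep_mul_summable hβ hα x).mul_left _)) ((gwStep_summable x).mul_left _),
      tsum_mul_left, tsum_mul_left, gwStep_tsum_mul hβ hα x, gwStep_tsum x]
    show (1 + AS β n) * (β * (x:ℝ) + α) + BS β α n * 1 = AS β (n+1) * x + BS β α (n+1)
    simp [AS, BS]; ring

end path

section logs
variable {βA βH αA αH : ℝ} (hβA : 0 < βA) (hβH : 0 < βH) (hαA : 0 < αA) (hαH : 0 < αH)
include hβA hβH hαA hαH

lemma log_step_ratio (x y : ℕ) :
    Real.log (gwStep βA αA x y / gwStep βH αH x y) =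
      ((βH * x + αH) - (βA * x + αA)) +
        (y : ℝ) * (Real.log (βA * x + αA) - Real.log (βH * x + αH)) := by
  have hA := lam_pos hβA hαA x
  have hH := lam_pos hβH hαH x
  unfold gwStep
  have hfac : (0:ℝ) < (Nat.factorial y : ℝ) := by positivity
  rw [Real.log_div (by positivity) (by positivity),
    Real.log_div (by positivity) (by positivity),
    Real.log_div (by positivity) (by positivity),
    Real.log_mul (by positivity) (by positivity),
    Real.log_mul (by positivity) (by positivity),
    Real.log_exp, Real.log_exp, Real.log_pow, Real.log_pow]
  ring

/-- The KL divergence of one step. -/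
noncomputable def klStep (βA αA βH αH : ℝ) (x : ℕ) : ℝ :=
  ((βH * x + αH) - (βA * x + αA)) +
    (βA * x + αA) * (Real.log (βA * x + αA) - Real.log (βH * x + αH))

lemma klStep_summand_summable (x : ℕ) :
    Summable (fun y => gwStep βA αA x y * Real.log (gwStep βA αA x y / gwStep βH αH x y)) := by
  have : (fun y => gwStep βA αA x y * Real.log (gwStep βA αA x y / gwStep βH αH x y)) =
      fun y => ((βH * x + αH) - (βA * x + αA)) * gwStep βA αA x y +
        (Real.log (βA * x + αA) - Real.log (βH * x + αH)) * (gwStep βA αA x y * y) := by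
    ext y
    rw [log_step_ratio hβA hβH hαA hαH x y]
    ring
  rw [this]
  exact ((gwStep_summable x).mul_left _).add ((gwStep_mul_summable hβA hαA x).mul_left _)

lemma klStep_tsum (x : ℕ) :
    ∑' y, gwStep βA αA x y * Real.log (gwStep βA αA x y / gwStep βH αH x y) =
      klStep βA αA βH αH x := by
  have : (fun y => gwStep βA αA x y * Real.log (gwStep βA αA x y / gwStep βH αH x y)) =
      fun y => ((βH * x + αH) - (βA * x + αA)) * gwStep βA αA x y +
        (Real.log (βA * x + αA) - Real.log (βH * x + αH)) * (gwStep βA αA x y * y) := by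
    ext y
    rw [log_step_ratio hβA hβH hαA hαH x y]
    ring
  rw [this, Summable.tsum_add ((gwStep_summable x).mul_left _) ((gwStep_mul_summable hβA hαA x).mul_left _),
    tsum_mul_left, tsum_mul_left, gwStep_tsum x, gwStep_tsum_mul hβA hαA x]
  unfold klStep
  ring

lemma klStep_nonneg (x : ℕ) : 0 ≤ klStep βA αA βH αH x := by
  have hA := lam_pos hβA hαA x
  have hH := lam_pos hβH hαH x
  unfold klStep
  have h := Real.log_le_sub_one_of_pos (show 0 < (βH * x + αH) / (βA * x + αA) by positivity)
  rw [Real.log_div (ne_of_gt hH) (ne_of_gt hA)] at h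
  have h2 : (βA * x + αA) * (Real.log (βH * x + αH) - Real.log (βA * x + αA)) ≤
      (βA * x + αA) * ((βH * x + αH) / (βA * x + αA) - 1) :=
    mul_le_mul_of_nonneg_left h (le_of_lt hA)
  have h3 : (βA * ↑x + αA) * ((βH * ↑x + αH) / (βA * ↑x + αA)) = βH * ↑x + αH :=
    mul_div_cancel₀ _ (ne_of_gt hA)
  nlinarith

/-- uniform bound on the log of the ratio of intensities -/
noncomputable def crat (βA βH αA αH : ℝ) : ℝ :=
  |Real.log βA - Real.log βH| + |Real.log αA - Real.log αH|

omit hβA hβH hαA hαH in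
lemma crat_nonneg : 0 ≤ crat βA βH αA αH :=
  add_nonneg (abs_nonneg _) (abs_nonneg _)

lemma abs_log_lam_sub (x : ℕ) :
    |Real.log (βA * x + αA) - Real.log (βH * x + αH)| ≤ crat βA βH αA αH := by
  have hA := lam_pos hβA hαA x
  have hH := lam_pos hβH hαH x
  set c := crat βA βH αA αH with hc
  have hcn : 0 ≤ c := crat_nonneg
  have key : ∀ βa βh aa ah : ℝ, 0 < βa → 0 < βh → 0 < aa → 0 < ah →
      |Real.log βa - Real.log βh| + |Real.log aa - Real.log ah| = c →
      Real.log (βa * x + aa) - Real.log (βh * x + ah) ≤ c := by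
    intro βa βh aa ah h1 h2 h3 h4 hceq
    have e1 : βa ≤ Real.exp c * βh := by
      have : Real.log βa ≤ c + Real.log βh := by
        rw [← hceq]
        have := le_abs_self (Real.log βa - Real.log βh)
        have := abs_nonneg (Real.log aa - Real.log ah)
        linarith
      calc βa = Real.exp (Real.log βa) := (Real.exp_log h1).symm
        _ ≤ Real.exp (c + Real.log βh) := Real.exp_le_exp.mpr this
        _ = Real.exp c * βh := by rw [Real.exp_add, Real.exp_log h2]
    have e2 : aa ≤ Real.exp c * ah := by
      have : Real.log aa ≤ c + Real.log ah := by
        rw [← hceq]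
        have := le_abs_self (Real.log aa - Real.log ah)
        have := abs_nonneg (Real.log βa - Real.log βh)
        linarith
      calc aa = Real.exp (Real.log aa) := (Real.exp_log h3).symm
        _ ≤ Real.exp (c + Real.log ah) := Real.exp_le_exp.mpr this
        _ = Real.exp c * ah := by rw [Real.exp_add, Real.exp_log h4]
    have hle : βa * x + aa ≤ Real.exp c * (βh * x + ah) := by
      have hx : (0:ℝ) ≤ (x:ℝ) := Nat.cast_nonneg x
      nlinarith [mul_le_mul_of_nonneg_right e1 hx]
    have hlam : (0:ℝ) < βa * x + aa := by positivity
    have hlam' : (0:ℝ) < βh * x + ah := by positivity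
    have := Real.log_le_log (by positivity) hle
    rwa [Real.log_mul (Real.exp_ne_zero c) (ne_of_gt hlam'), Real.log_exp,
      ← sub_le_iff_le_add] at this
  rw [abs_sub_le_iff]
  constructor
  · exact key βA βH αA αH hβA hβH hαA hαH rfl
  · refine key βH βA αH αA hβH hβA hαH hαA ?_
    rw [hc, crat, abs_sub_comm (Real.log βH) _, abs_sub_comm (Real.log αH) _]

lemma abs_log_step_ratio_le (x y : ℕ) :
    |Real.log (gwStep βA αA x y / gwStep βH αH x y)| ≤
      (|αH - αA| + |βH - βA| + crat βA βH αA αH) * (1 + (x:ℝ) + (y:ℝ)) := by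
  rw [log_step_ratio hβA hβH hαA hαH x y]
  have h1 : |((βH * x + αH) - (βA * x + αA))| ≤ |βH - βA| * x + |αH - αA| := by
    have : ((βH * x + αH) - (βA * x + αA)) = (βH - βA) * x + (αH - αA) := by ring
    rw [this]
    calc |(βH - βA) * x + (αH - αA)| ≤ |(βH - βA) * x| + |αH - αA| := abs_add_le _ _
      _ = |βH - βA| * x + |αH - αA| := by rw [abs_mul, Nat.abs_cast]
  have h2 : |(y : ℝ) * (Real.log (βA * x + αA) - Real.log (βH * x + αH))| ≤
      (y : ℝ) * crat βA βH αA αH := by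
    rw [abs_mul, Nat.abs_cast]
    exact mul_le_mul_of_nonneg_left (abs_log_lam_sub hβA hβH hαA hαH x) (Nat.cast_nonneg y)
  calc |_ + _| ≤ _ := abs_add_le _ _
    _ ≤ (|βH - βA| * x + |αH - αA|) + (y : ℝ) * crat βA βH αA αH := add_le_add h1 h2
    _ ≤ (|αH - αA| + |βH - βA| + crat βA βH αA αH) * (1 + (x:ℝ) + (y:ℝ)) := by
      have hx : (0:ℝ) ≤ (x:ℝ) := Nat.cast_nonneg x
      have hy : (0:ℝ) ≤ (y:ℝ) := Nat.cast_nonneg y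
      have c1 : (0:ℝ) ≤ |αH - αA| := abs_nonneg _
      have c2 : (0:ℝ) ≤ |βH - βA| := abs_nonneg _
      have c3 : (0:ℝ) ≤ crat βA βH αA αH := crat_nonneg
      nlinarith

end logs

noncomputable def cb (βA βH αA αH : ℝ) : ℝ := |αH - αA| + |βH - βA| + crat βA βH αA αH

section main
variable {βA βH αA αH : ℝ} (hβA : 0 < βA) (hβH : 0 < βH) (hαA : 0 < αA) (hαH : 0 < αH)
include hβA hβH hαA hαH

lemma cb_nonneg : 0 ≤ cb βA βH αA αH :=
  add_nonneg (add_nonneg (abs_nonneg _) (abs_nonneg _)) crat_nonneg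

lemma abs_log_path_ratio_le (n x : ℕ) (ω : Fin n → ℕ) :
    |Real.log (gwPath βA αA x n ω / gwPath βH αH x n ω)| ≤
      2 * n * cb βA βH αA αH * (1 + (x:ℝ) + ∑ k, (ω k : ℝ)) := by
  have hrat : ∀ k : Fin n, gwPath βA αA x n ω / gwPath βH αH x n ω =
      gwPath βA αA x n ω / gwPath βH αH x n ω := fun _ => rfl
  -- rewrite quotient of products as product of quotients
  have hprod : gwPath βA αA x n ω / gwPath βH αH x n ω =
      ∏ k : Fin n,
        (gwStep βA αA
          (if (k : ℕ) = 0 then x else ω ⟨(k : ℕ) - 1, Nat.lt_of_le_of_lt (Nat.sub_le _ _) k.2⟩)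
          (ω k) /
        gwStep βH αH
          (if (k : ℕ) = 0 then x else ω ⟨(k : ℕ) - 1, Nat.lt_of_le_of_lt (Nat.sub_le _ _) k.2⟩)
          (ω k)) := by
    unfold gwPath
    rw [Finset.prod_div_distrib]
  rw [hprod, Real.log_prod (fun k _ =>
    ne_of_gt (div_pos (gwStep_pos hβA hαA _ _) (gwStep_pos hβH hαH _ _)))]
  set S := ∑ k, (ω k : ℝ) with hS
  have hSnn : 0 ≤ S := Finset.sum_nonneg fun _ _ => Nat.cast_nonneg _
  have hxnn : (0:ℝ) ≤ (x:ℝ) := Nat.cast_nonneg _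
  calc |∑ k : Fin n, Real.log _| ≤ ∑ k : Fin n, |Real.log _| := Finset.abs_sum_le_sum_abs _ _
    _ ≤ ∑ k : Fin n, 2 * cb βA βH αA αH * (1 + (x:ℝ) + S) := by
      apply Finset.sum_le_sum
      intro k _
      refine le_trans (abs_log_step_ratio_le hβA hβH hαA hαH _ _) ?_
      have hprev : (((if (k : ℕ) = 0 then x
          else ω ⟨(k : ℕ) - 1, Nat.lt_of_le_of_lt (Nat.sub_le _ _) k.2⟩) : ℕ) : ℝ) ≤ (x:ℝ) + S := by
        split_ifs with h
        · linarith
        · have : ((ω ⟨(k : ℕ) - 1, Nat.lt_of_le_of_lt (Nat.sub_le _ _) k.2⟩ : ℕ) : ℝ) ≤ S := by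
            rw [hS]
            exact Finset.single_le_sum (f := fun j => ((ω j : ℕ) : ℝ))
              (fun _ _ => Nat.cast_nonneg _) (Finset.mem_univ _)
          linarith
      have hωk : ((ω k : ℕ) : ℝ) ≤ S := by
        rw [hS]
        exact Finset.single_le_sum (f := fun j => ((ω j : ℕ) : ℝ))
          (fun _ _ => Nat.cast_nonneg _) (Finset.mem_univ _)
      have hcb : 0 ≤ cb βA βH αA αH := cb_nonneg hβA hβH hαA hαH
      show cb βA βH αA αH * _ ≤ _
      nlinarith
    _ = 2 * n * cb βA βH αA αH * (1 + (x:ℝ) + S) := by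
      rw [Finset.sum_const, Finset.card_univ, Fintype.card_fin, nsmul_eq_mul]
      ring

lemma gwPath_affine (n y : ℕ) (a b : ℝ) :
    Summable (fun ω : Fin n → ℕ => gwPath βA αA y n ω * (a + b * ∑ k, (ω k : ℝ))) ∧
    ∑' ω : Fin n → ℕ, gwPath βA αA y n ω * (a + b * ∑ k, (ω k : ℝ)) =
      a + b * (AS βA n * y + BS βA αA n) := by
  have h1 := gwPath_sum_one hβA hαA n y
  have h2 := gwPath_sum_mom hβA hαA n y
  have he : (fun ω : Fin n → ℕ => gwPath βA αA y n ω * (a + b * ∑ k, (ω k : ℝ))) =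
      fun ω => gwPath βA αA y n ω * a + b * (gwPath βA αA y n ω * ∑ k, (ω k : ℝ)) := by
    ext ω; ring
  constructor
  · rw [he]; exact (h1.1.mul_right a).add (h2.1.mul_left b)
  · rw [he, Summable.tsum_add (h1.1.mul_right a) (h2.1.mul_left b), tsum_mul_right, tsum_mul_left,
      h1.2, h2.2]
    ring

lemma relEnt_summand_summable (n x : ℕ) :
    Summable (fun ω : Fin n → ℕ =>
      gwPath βA αA x n ω * Real.log (gwPath βA αA x n ω / gwPath βH αH x n ω)) := by
  rw [← summable_abs_iff]
  set K := 2 * n * cb βA βH αA αH with hK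
  have hKnn : 0 ≤ K := by
    rw [hK]
    have := cb_nonneg hβA hβH hαA hαH
    positivity
  refine Summable.of_nonneg_of_le (fun ω => abs_nonneg _) (fun ω => ?_)
    ((gwPath_affine hβA hβH hαA hαH n x (K * (1 + x)) K).1)
  rw [abs_mul, abs_of_pos (gwPath_pos hβA hαA x n ω)]
  have hb := abs_log_path_ratio_le hβA hβH hαA hαH n x ω
  have hp := le_of_lt (gwPath_pos hβA hαA x n ω)
  calc gwPath βA αA x n ω * |Real.log _| ≤ gwPath βA αA x n ω * (K * (1 + (x:ℝ) + ∑ k, (ω k : ℝ))) :=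
        mul_le_mul_of_nonneg_left hb hp
    _ = gwPath βA αA x n ω * (K * (1 + x) + K * ∑ k, (ω k : ℝ)) := by ring

lemma relEnt_zero (x : ℕ) : relEnt βA αA βH αH x 0 = 0 := by
  unfold relEnt
  have : (fun ω : Fin 0 → ℕ =>
      gwPath βA αA x 0 ω * Real.log (gwPath βA αA x 0 ω / gwPath βH αH x 0 ω)) = fun _ => 0 := by
    ext ω
    rw [gwPath_zero, gwPath_zero]
    norm_num
  rw [this, tsum_zero]

set_option maxHeartbeats 2000000 in
lemma relEnt_rec (n x : ℕ) :
    relEnt βA αA βH αH x (n+1) = klStep βA αA βH αH x +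
      ∑' y : ℕ, gwStep βA αA x y * relEnt βA αA βH αH y n := by
  set a : ℕ → ℝ := fun y => gwStep βA αA x y * Real.log (gwStep βA αA x y / gwStep βH αH x y)
    with ha
  set F1 : ℕ × (Fin n → ℕ) → ℝ := fun p => a p.1 * gwPath βA αA p.1 n p.2 with hF1
  set F2 : ℕ × (Fin n → ℕ) → ℝ := fun p => gwStep βA αA x p.1 *
    (gwPath βA αA p.1 n p.2 * Real.log (gwPath βA αA p.1 n p.2 / gwPath βH αH p.1 n p.2)) with hF2
  have key : ∀ p : ℕ × (Fin n → ℕ),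
      gwPath βA αA x (n+1) (Fin.cons p.1 p.2) *
        Real.log (gwPath βA αA x (n+1) (Fin.cons p.1 p.2) /
          gwPath βH αH x (n+1) (Fin.cons p.1 p.2)) = F1 p + F2 p := by
    rintro ⟨y, ω⟩
    rw [gwPath_cons βA αA x n y ω, gwPath_cons βH αH x n y ω]
    have hq : gwStep βA αA x y * gwPath βA αA y n ω / (gwStep βH αH x y * gwPath βH αH y n ω) =
        (gwStep βA αA x y / gwStep βH αH x y) * (gwPath βA αA y n ω / gwPath βH αH y n ω) :=
      mul_div_mul_comm _ _ _ _
    rw [hq, Real.log_mul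
      (ne_of_gt (div_pos (gwStep_pos hβA hαA _ _) (gwStep_pos hβH hαH _ _)))
      (ne_of_gt (div_pos (gwPath_pos hβA hαA _ _ _) (gwPath_pos hβH hαH _ _ _)))]
    simp only [hF1, hF2, ha]
    ring
  -- summability of F1
  have hF1slice : ∀ y : ℕ, Summable fun ω => F1 (y, ω) := by
    intro y
    simp only [hF1]
    exact (gwPath_sum_one hβA hαA n y).1.mul_left _
  have hF1abs : Summable fun p : ℕ × (Fin n → ℕ) => |F1 p| := by
    apply (summable_prod_of_nonneg (fun p => abs_nonneg _)).mpr
    constructor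
    · intro y
      have : (fun ω => |F1 (y, ω)|) = fun ω => |a y| * gwPath βA αA y n ω := by
        ext ω
        rw [hF1]
        simp only
        rw [abs_mul, abs_of_pos (gwPath_pos hβA hαA _ _ _)]
      rw [this]
      exact (gwPath_sum_one hβA hαA n y).1.mul_left _
    · have he : ∀ y : ℕ, ∑' ω, |F1 (y, ω)| = |a y| := by
        intro y
        have : (fun ω => |F1 (y, ω)|) = fun ω => |a y| * gwPath βA αA y n ω := by
          ext ω
          rw [hF1]
          simp only
          rw [abs_mul, abs_of_pos (gwPath_pos hβA hαA _ _ _)]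
        rw [this, tsum_mul_left, (gwPath_sum_one hβA hαA n y).2, mul_one]
      simp only [he]
      exact (klStep_summand_summable hβA hβH hαA hαH x).abs
  have hF1sum : Summable F1 := summable_abs_iff.mp hF1abs
  -- summability of F2
  have hF2slice : ∀ y : ℕ, Summable fun ω => F2 (y, ω) := by
    intro y
    simp only [hF2]
    exact (relEnt_summand_summable hβA hβH hαA hαH n y).mul_left _
  set K := 2 * n * cb βA βH αA αH with hK
  have hKnn : 0 ≤ K := by
    rw [hK]
    have := cb_nonneg hβA hβH hαA hαH
    positivity
  have hF2abs : Summable fun p : ℕ × (Fin n → ℕ) => |F2 p| := by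
    set G : ℕ × (Fin n → ℕ) → ℝ := fun p => gwStep βA αA x p.1 *
      (gwPath βA αA p.1 n p.2 * (K * (1 + p.1) + K * ∑ k, (p.2 k : ℝ))) with hG
    have hle : ∀ p, |F2 p| ≤ G p := by
      rintro ⟨y, ω⟩
      rw [hF2, hG]
      simp only
      rw [abs_mul, abs_mul, abs_of_pos (gwStep_pos hβA hαA _ _),
        abs_of_pos (gwPath_pos hβA hαA _ _ _)]
      apply mul_le_mul_of_nonneg_left _ (le_of_lt (gwStep_pos hβA hαA _ _))
      apply mul_le_mul_of_nonneg_left _ (le_of_lt (gwPath_pos hβA hαA _ _ _))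
      refine le_trans (abs_log_path_ratio_le hβA hβH hαA hαH n y ω) ?_
      rw [← hK]
      apply le_of_eq
      ring
    have hGsum : Summable G := by
      apply (summable_prod_of_nonneg ?_).mpr
      constructor
      · intro y
        simp only [hG]
        exact ((gwPath_affine hβA hβH hαA hαH n y (K * (1 + y)) K).1).mul_left _
      · have he : ∀ y : ℕ, ∑' ω, G (y, ω) =
            gwStep βA αA x y * (K * (1 + y) + K * (AS βA n * y + BS βA αA n)) := by
          intro y
          rw [hG]
          simp only
          rw [tsum_mul_left, (gwPath_affine hβA hβH hαA hαH n y (K * (1 + y)) K).2]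
        simp only [he]
        have he2 : (fun y : ℕ => gwStep βA αA x y * (K * (1 + y) + K * (AS βA n * y + BS βA αA n))) =
            fun y : ℕ => (K + K * BS βA αA n) * gwStep βA αA x y +
              (K + K * AS βA n) * (gwStep βA αA x y * y) := by
          ext y; ring
        rw [he2]
        exact ((gwStep_summable x).mul_left _).add ((gwStep_mul_summable hβA hαA x).mul_left _)
      · rintro ⟨y, ω⟩
        rw [hG]
        simp only
        have h1 : (0:ℝ) ≤ K * (1 + y) + K * ∑ k, (ω k : ℝ) := by
          have : (0:ℝ) ≤ ∑ k, (ω k : ℝ) := Finset.sum_nonneg fun _ _ => Nat.cast_nonneg _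
          have hy : (0:ℝ) ≤ (y:ℝ) := Nat.cast_nonneg _
          positivity
        exact mul_nonneg (le_of_lt (gwStep_pos hβA hαA _ _))
          (mul_nonneg (le_of_lt (gwPath_pos hβA hαA _ _ _)) h1)
    exact Summable.of_nonneg_of_le (fun p => abs_nonneg _) hle hGsum
  have hF2sum : Summable F2 := summable_abs_iff.mp hF2abs
  -- now compute
  unfold relEnt
  rw [← Equiv.tsum_eq (pathEquiv n)]
  have he : ∀ p : ℕ × (Fin n → ℕ),
      gwPath βA αA x (n+1) (pathEquiv n p) *
        Real.log (gwPath βA αA x (n+1) (pathEquiv n p) /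
          gwPath βH αH x (n+1) (pathEquiv n p)) = F1 p + F2 p := fun p => key p
  rw [tsum_congr he, Summable.tsum_add hF1sum hF2sum, Summable.tsum_prod' hF1sum hF1slice,
    Summable.tsum_prod' hF2sum hF2slice]
  congr 1
  · have : ∀ y : ℕ, ∑' ω : Fin n → ℕ, F1 (y, ω) = a y := by
      intro y
      rw [hF1]
      simp only
      rw [tsum_mul_left, (gwPath_sum_one hβA hαA n y).2, mul_one]
    rw [tsum_congr this, ha]
    exact klStep_tsum hβA hβH hαA hαH x
  · apply tsum_congr
    intro y
    rw [hF2]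
    simp only
    rw [tsum_mul_left]

lemma relEnt_nonneg (n : ℕ) : ∀ x : ℕ, 0 ≤ relEnt βA αA βH αH x n := by
  induction n with
  | zero => intro x; rw [relEnt_zero hβA hβH hαA hαH]
  | succ n ih =>
    intro x
    rw [relEnt_rec hβA hβH hαA hαH n x]
    refine add_nonneg (klStep_nonneg hβA hβH hαA hαH x) (tsum_nonneg fun y => ?_)
    exact mul_nonneg (le_of_lt (gwStep_pos hβA hαA _ _)) (ih y)

end main

noncomputable def AA (β : ℝ) : ℕ → ℝ
  | 0 => 0
  | n+1 => 1 + β * AA β n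

noncomputable def BB (β α : ℝ) : ℕ → ℝ
  | 0 => 0
  | n+1 => BB β α n + α * AA β n

noncomputable def CC (βA βH : ℝ) : ℝ := βA * (Real.log βA - Real.log βH) - βA + βH

noncomputable def DD (βA βH αA αH : ℝ) : ℝ :=
  CC βA βH * αA / βA + αA * (Real.log αA - Real.log αH + Real.log βH - Real.log βA)
    - αA * βH / βA + αH

lemma log_sum_ineq {a1 a2 b1 b2 : ℝ} (ha1 : 0 < a1) (ha2 : 0 < a2) (hb1 : 0 < b1)
    (hb2 : 0 < b2) :
    (a1 + a2) * (Real.log (a1 + a2) - Real.log (b1 + b2)) ≤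
      a1 * (Real.log a1 - Real.log b1) + a2 * (Real.log a2 - Real.log b2) := by
  have hl : (0:ℝ) < a1 + a2 := by linarith
  have hm : (0:ℝ) < b1 + b2 := by linarith
  have key : ∀ a b : ℝ, 0 < a → 0 < b →
      a * (Real.log b + Real.log (a1 + a2) - Real.log a - Real.log (b1 + b2)) ≤
        b * (a1 + a2) / (b1 + b2) - a := by
    intro a b ha hb
    have h1 : Real.log (b * (a1 + a2) / (a * (b1 + b2))) ≤ b * (a1 + a2) / (a * (b1 + b2)) - 1 :=
      Real.log_le_sub_one_of_pos (by positivity)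
    have e1 : Real.log (b * (a1 + a2) / (a * (b1 + b2))) =
        Real.log b + Real.log (a1 + a2) - Real.log a - Real.log (b1 + b2) := by
      rw [Real.log_div (by positivity) (by positivity), Real.log_mul (ne_of_gt hb) (ne_of_gt hl),
        Real.log_mul (ne_of_gt ha) (ne_of_gt hm)]
      ring
    rw [e1] at h1
    have h2 := mul_le_mul_of_nonneg_left h1 (le_of_lt ha)
    have e2 : a * (b * (a1 + a2) / (a * (b1 + b2)) - 1) = b * (a1 + a2) / (b1 + b2) - a := by
      field_simp
    rw [e2] at h2
    exact h2
  have k1 := key a1 b1 ha1 hb1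
  have k2 := key a2 b2 ha2 hb2
  have e3 : b1 * (a1 + a2) / (b1 + b2) + b2 * (a1 + a2) / (b1 + b2) = a1 + a2 := by
    field_simp
  nlinarith

section main
variable {βA βH αA αH : ℝ} (hβA : 0 < βA) (hβH : 0 < βH) (hαA : 0 < αA) (hαH : 0 < αH)
include hβA hβH hαA hαH

lemma klStep_le (x : ℕ) : klStep βA αA βH αH x ≤ CC βA βH * x + DD βA βH αA αH := by
  have hcore : (βA * x + αA) * (Real.log (βA * x + αA) - Real.log (βH * x + αH)) ≤
      βA * x * (Real.log βA - Real.log βH) + αA * (Real.log αA - Real.log αH) := by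
    rcases Nat.eq_zero_or_pos x with hx | hx
    · subst hx
      push_cast
      simp only [mul_zero, zero_add, zero_mul]
      norm_num
    · have hxpos : (0:ℝ) < (x:ℝ) := by exact_mod_cast hx
      have h := log_sum_ineq (mul_pos hβA hxpos) hαA (mul_pos hβH hxpos) hαH
      have e1 : Real.log (βA * x) = Real.log βA + Real.log (x:ℝ) :=
        Real.log_mul (ne_of_gt hβA) (ne_of_gt hxpos)
      have e2 : Real.log (βH * x) = Real.log βH + Real.log (x:ℝ) :=
        Real.log_mul (ne_of_gt hβH) (ne_of_gt hxpos)
      rw [e1, e2] at h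
      calc (βA * x + αA) * (Real.log (βA * x + αA) - Real.log (βH * x + αH)) ≤
            βA * x * (Real.log βA + Real.log (x:ℝ) - (Real.log βH + Real.log (x:ℝ))) +
              αA * (Real.log αA - Real.log αH) := h
        _ = βA * x * (Real.log βA - Real.log βH) + αA * (Real.log αA - Real.log αH) := by ring
  have heq : CC βA βH * x + DD βA βH αA αH =
      ((βH * x + αH) - (βA * x + αA)) +
        (βA * x * (Real.log βA - Real.log βH) + αA * (Real.log αA - Real.log αH)) := by
    unfold DD CC
    field_simp
    ring
  rw [klStep, heq]
  linarith

end main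

section master
variable {βA βH αA αH : ℝ} (hβA : 0 < βA) (hβH : 0 < βH) (hαA : 0 < αA) (hαH : 0 < αH)
include hβA hβH hαA hαH

lemma relEnt_master (n : ℕ) : ∀ x : ℕ,
    relEnt βA αA βH αH x n ≤
      CC βA βH * (AA βA n * x + BB βA αA n) + DD βA βH αA αH * n := by
  induction n with
  | zero =>
    intro x
    rw [relEnt_zero hβA hβH hαA hαH]
    simp [AA, BB]
  | succ n ih =>
    intro x
    rw [relEnt_rec hβA hβH hαA hαH n x]
    have he : (fun y : ℕ => gwStep βA αA x y *
        (CC βA βH * (AA βA n * y + BB βA αA n) + DD βA βH αA αH * n)) =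
        fun y : ℕ => (CC βA βH * AA βA n) * (gwStep βA αA x y * y) +
          (CC βA βH * BB βA αA n + DD βA βH αA αH * n) * gwStep βA αA x y := by
      ext y; ring
    have hg : Summable (fun y : ℕ => gwStep βA αA x y *
        (CC βA βH * (AA βA n * y + BB βA αA n) + DD βA βH αA αH * n)) := by
      rw [he]
      exact ((gwStep_mul_summable hβA hαA x).mul_left _).add ((gwStep_summable x).mul_left _)
    have hle : ∀ y : ℕ, gwStep βA αA x y * relEnt βA αA βH αH y n ≤
        gwStep βA αA x y * (CC βA βH * (AA βA n * y + BB βA αA n) + DD βA βH αA αH * n) :=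
      fun y => mul_le_mul_of_nonneg_left (ih y) (le_of_lt (gwStep_pos hβA hαA x y))
    have hf : Summable (fun y : ℕ => gwStep βA αA x y * relEnt βA αA βH αH y n) :=
      Summable.of_nonneg_of_le
        (fun y => mul_nonneg (le_of_lt (gwStep_pos hβA hαA x y))
          (relEnt_nonneg hβA hβH hαA hαH n y)) hle hg
    have h1 := Summable.tsum_le_tsum hle hf hg
    have h2 : ∑' y : ℕ, gwStep βA αA x y *
        (CC βA βH * (AA βA n * y + BB βA αA n) + DD βA βH αA αH * n) =
        (CC βA βH * AA βA n) * (βA * x + αA) +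
          (CC βA βH * BB βA αA n + DD βA βH αA αH * n) := by
      rw [he, Summable.tsum_add ((gwStep_mul_summable hβA hαA x).mul_left _)
        ((gwStep_summable x).mul_left _), tsum_mul_left, tsum_mul_left,
        gwStep_tsum_mul hβA hαA x, gwStep_tsum x]
      ring
    have h3 := klStep_le hβA hβH hαA hαH x
    have hrhs : CC βA βH * (AA βA (n+1) * x + BB βA αA (n+1)) + DD βA βH αA αH * (n+1) =
        (CC βA βH * x + DD βA βH αA αH) + ((CC βA βH * AA βA n) * (βA * x + αA) +
          (CC βA βH * BB βA αA n + DD βA βH αA αH * n)) := by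
      simp only [AA, BB]
      push_cast
      ring
    rw [h2] at h1
    push_cast
    rw [hrhs] at *
    linarith

end master

lemma AA_closed {β : ℝ} (hβ : β ≠ 1) (n : ℕ) : AA β n = (1 - β ^ n) / (1 - β) := by
  have h1 : 1 - β ≠ 0 := sub_ne_zero.mpr (Ne.symm hβ)
  induction n with
  | zero => simp [AA]
  | succ n ih =>
    simp only [AA, ih, pow_succ]
    field_simp
    ring

lemma BB_closed {β α : ℝ} (hβ : β ≠ 1) (n : ℕ) :
    BB β α n = α * ((n : ℝ) - AA β n) / (1 - β) := by
  have h1 : 1 - β ≠ 0 := sub_ne_zero.mpr (Ne.symm hβ)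
  induction n with
  | zero => simp [AA, BB]
  | succ n ih =>
    simp only [BB, ih, AA]
    rw [AA_closed hβ n]
    push_cast
    field_simp
    ring

lemma AA_one (n : ℕ) : AA 1 n = n := by
  induction n with
  | zero => simp [AA]
  | succ n ih => simp [AA, ih]; push_cast; ring

lemma BB_one {α : ℝ} (n : ℕ) : BB 1 α n = α * n * (n - 1) / 2 := by
  induction n with
  | zero => simp [BB]
  | succ n ih => simp [BB, ih, AA_one]; push_cast; ring

set_option maxHeartbeats 2000000 in
/-- Closed-form upper bound `E_n^U` for the relative entropy on the class
of strictly positive parameters with `α_H·β_A − α_A·β_H ≠ 0`. -/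
theorem relEnt_upper_bound (βA βH αA αH : ℝ)
    (hβA : 0 < βA) (hβH : 0 < βH) (hαA : 0 < αA) (hαH : 0 < αH)
    (hγ : αH * βA - αA * βH ≠ 0)
    (ω₀ : ℕ) (hω₀ : 1 ≤ ω₀) (n : ℕ) (hn : 1 ≤ n) :
    (βA ≠ 1 → relEnt βA αA βH αH ω₀ n ≤
      ((βA * (Real.log (βA / βH) - 1) + βH) / (1 - βA)) * ((ω₀ : ℝ) - αA / (1 - βA))
          * (1 - βA ^ n)
        + (αA * (βA * (Real.log (βA / βH) - 1) + βH) / (βA * (1 - βA))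
            + αA * (Real.log (αA * βH / (αH * βA)) - βH / βA) + αH) * (n : ℝ)) ∧
    (βA = 1 → relEnt βA αA βH αH ω₀ n ≤
      (βH - Real.log βH - 1) * ((αA / 2) * (n : ℝ) ^ 2 + ((ω₀ : ℝ) + αA / 2) * (n : ℝ))
        + (αA * (Real.log (αA * βH / αH) - βH) + αH) * (n : ℝ)) := by
  have master := relEnt_master hβA hβH hαA hαH n ω₀
  constructor
  · intro hβ1
    have h1 : 1 - βA ≠ 0 := sub_ne_zero.mpr (Ne.symm hβ1)
    refine le_trans master (le_of_eq ?_)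
    rw [AA_closed hβ1 n, BB_closed hβ1 n, AA_closed hβ1 n]
    rw [Real.log_div (ne_of_gt hβA) (ne_of_gt hβH),
      Real.log_div (ne_of_gt (mul_pos hαA hβH)) (ne_of_gt (mul_pos hαH hβA)),
      Real.log_mul (ne_of_gt hαA) (ne_of_gt hβH), Real.log_mul (ne_of_gt hαH) (ne_of_gt hβA)]
    unfold DD CC
    have hβA' : βA ≠ 0 := ne_of_gt hβA
    set LA := Real.log βA with hLA
    set LH := Real.log βH with hLH
    set LAA := Real.log αA with hLAA
    set LAH := Real.log αH with hLAH
    set P := βA ^ n with hP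
    set N := (n : ℝ) with hN
    set W := (ω₀ : ℝ) with hW
    field_simp
    ring
  · intro hβ1
    subst hβ1
    refine le_trans master (le_of_eq ?_)
    rw [AA_one, BB_one]
    rw [Real.log_div (ne_of_gt (mul_pos hαA hβH)) (ne_of_gt hαH),
      Real.log_mul (ne_of_gt hαA) (ne_of_gt hβH)]
    unfold DD CC
    simp only [Real.log_one]
    set LH := Real.log βH with hLH
    set LAA := Real.log αA with hLAA
    set LAH := Real.log αH with hLAH
    set N := (n : ℝ) with hN
    set W := (ω₀ : ℝ) with hW
    field_simp
    ring
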